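/- In a locally finite topos, every object A admits an injective hull: an essential monomorphism e : A → E with E injective. -/

import Mathlib

open CategoryTheory CategoryTheory.Limits
set_option linter.unusedSectionVars false

universe u v

/-- A subobject classifier, phrased as a property of a category with a terminal object. -/
class HasSubobjectClassifier (C : Type u) [Category.{v} C] [HasTerminal C] : Prop where
  exists_classifier : ∃ (Ω : C) (truth : ⊤_ C ⟶ Ω), ∀ {U X : C} (m : U ⟶ X), Mono m →
    ∃! χ : X ⟶ Ω, IsPullback m (terminal.from U) χ truth

/-- A monomorphism `e` is essential if whenever `e ≫ g` is monic, so is `g`. -/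
def Essential {C : Type u} [Category.{v} C] {A B : C} (e : A ⟶ B) : Prop :=
  Mono e ∧ ∀ ⦃X : C⦄ (g : B ⟶ X), Mono (e ≫ g) → Mono g

namespace InjHullAux

open MonoidalCategory CartesianMonoidalCategory CartesianClosed

variable {C : Type u} [Category.{v} C]

/-- `tr` is a subobject classifier. -/
def Classifies [HasTerminal C] {Ω : C} (tr : ⊤_ C ⟶ Ω) : Prop :=
  ∀ {U X : C} (m : U ⟶ X), Mono m → ∃! χ : X ⟶ Ω, IsPullback m (terminal.from U) χ tr

section Basic

variable [HasFiniteLimits C] {Ω : C} {tr : ⊤_ C ⟶ Ω}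

lemma term_ext {X : C} (f g : X ⟶ ⊤_ C) : f = g := terminal.hom_ext f g

/-- The classifying map of a mono. -/
noncomputable def cls (hc : Classifies tr) {U X : C} (m : U ⟶ X) (hm : Mono m) : X ⟶ Ω :=
  (hc m hm).choose

lemma cls_isPullback (hc : Classifies tr) {U X : C} (m : U ⟶ X) (hm : Mono m) :
    IsPullback m (terminal.from U) (cls hc m hm) tr :=
  (hc m hm).choose_spec.1

lemma cls_unique (hc : Classifies tr) {U X : C} (m : U ⟶ X) (hm : Mono m) (χ : X ⟶ Ω)
    (h : IsPullback m (terminal.from U) χ tr) : χ = cls hc m hm :=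
  (hc m hm).choose_spec.2 χ h

lemma cls_w (hc : Classifies tr) {U X : C} (m : U ⟶ X) (hm : Mono m) :
    m ≫ cls hc m hm = terminal.from U ≫ tr :=
  (cls_isPullback hc m hm).w

lemma mono_tr : Mono tr := by
  haveI : IsSplitMono tr := IsSplitMono.mk' ⟨terminal.from Ω, term_ext _ _⟩
  infer_instance

/-- Helper for building `IsPullback` from the universal property. -/
lemma isPullback_mk {P X Y Z : C} {fst : P ⟶ X} {snd : P ⟶ Y} {f : X ⟶ Z} {g : Y ⟶ Z}
    (w : fst ≫ f = snd ≫ g)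
    (lift : ∀ {T : C} (a : T ⟶ X) (b : T ⟶ Y), a ≫ f = b ≫ g → (T ⟶ P))
    (hfst : ∀ {T : C} (a : T ⟶ X) (b : T ⟶ Y) (h : a ≫ f = b ≫ g), lift a b h ≫ fst = a)
    (hsnd : ∀ {T : C} (a : T ⟶ X) (b : T ⟶ Y) (h : a ≫ f = b ≫ g), lift a b h ≫ snd = b)
    (uniq : ∀ {T : C} (m m' : T ⟶ P), m ≫ fst = m' ≫ fst → m ≫ snd = m' ≫ snd → m = m') :
    IsPullback fst snd f g :=
  IsPullback.of_isLimit (PullbackCone.IsLimit.mk w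
    (fun s => lift s.fst s.snd s.condition)
    (fun s => hfst _ _ _) (fun s => hsnd _ _ _)
    (fun s m h1 h2 => uniq m (lift s.fst s.snd s.condition)
      (by rw [hfst]; exact h1) (by rw [hsnd]; exact h2)))

/-- The subobject classifier is injective. -/
lemma injective_omega (hc : Classifies tr) : Injective Ω := by
  constructor
  intro S T g f hf
  haveI : Mono tr := mono_tr
  -- U := pullback of truth along g
  set u : pullback g tr ⟶ S := pullback.fst g tr with hu
  haveI hmu : Mono u := inferInstance
  haveI hmuf : Mono (u ≫ f) := mono_comp _ _
  set χ : T ⟶ Ω := cls hc (u ≫ f) hmuf with hχ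
  refine ⟨χ, ?_⟩
  -- both `g` and `f ≫ χ` classify `u`, hence are equal
  have h1 : IsPullback u (terminal.from _) g tr := by
    have := IsPullback.of_hasPullback g tr
    rwa [term_ext (pullback.snd g tr) (terminal.from _)] at this
  have h2 : IsPullback u (terminal.from _) (f ≫ χ) tr := by
    have hw : u ≫ f ≫ χ = terminal.from _ ≫ tr := by
      rw [← Category.assoc, cls_w hc (u ≫ f) hmuf]
    refine isPullback_mk hw (fun {T'} a b hab => ?_) (fun {T'} a b hab => ?_)
      (fun {T'} a b hab => term_ext _ _) (fun {T'} m m' h _ => ?_)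
    · exact (cls_isPullback hc (u ≫ f) hmuf).lift (a ≫ f) b
        (by rw [Category.assoc, hab])
    · have := (cls_isPullback hc (u ≫ f) hmuf).lift_fst (a ≫ f) b
        (by rw [Category.assoc, hab])
      rw [← Category.assoc] at this
      exact (cancel_mono f).mp this
    · exact (cancel_mono u).mp h
  rw [cls_unique hc u hmu g h1, cls_unique hc u hmu (f ≫ χ) h2]

/-- The identity is classified by `⊤`. -/
lemma isPullback_id (X : C) :
    IsPullback (𝟙 X) (terminal.from X) (terminal.from X ≫ tr) tr := by
  refine isPullback_mk (by rw [Category.id_comp])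
    (fun {T} a b hab => a) (fun {T} a b hab => Category.comp_id a)
    (fun {T} a b hab => term_ext _ _)
    (fun {T} m m' h _ => by simpa using h)

/-- A mono which is "epi with respect to maps into Ω" is iso. -/
lemma isIso_of_omegaEpi (hc : Classifies tr) {M Z : C} (m : M ⟶ Z) (hm : Mono m)
    (h : ∀ χ χ' : Z ⟶ Ω, m ≫ χ = m ≫ χ' → χ = χ') : IsIso m := by
  haveI := hm
  have hw : m ≫ (terminal.from Z ≫ tr) = m ≫ cls hc m hm := by
    rw [cls_w hc m hm, ← Category.assoc, term_ext (m ≫ terminal.from Z) (terminal.from M)]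
  have hχ : terminal.from Z ≫ tr = cls hc m hm := h _ _ hw
  have hcomm : (𝟙 Z) ≫ cls hc m hm = terminal.from Z ≫ tr := by
    rw [Category.id_comp, ← hχ]
  have hk : (cls_isPullback hc m hm).lift (𝟙 Z) (terminal.from Z) hcomm ≫ m = 𝟙 Z :=
    (cls_isPullback hc m hm).lift_fst _ _ _
  haveI : IsSplitEpi m := ⟨⟨⟨_, hk⟩⟩⟩
  exact isIso_of_mono_of_isSplitEpi m

end Basic

end InjHullAux

namespace InjHullAux
open MonoidalCategory CartesianMonoidalCategory CartesianClosed
variable {C : Type u} [Category.{v} C]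
section Card

variable [HasFiniteLimits C] {Ω : C} {tr : ⊤_ C ⟶ Ω}

lemma card_le_of_mono (hc : Classifies tr) (lf : ∀ A B : C, Finite (A ⟶ B))
    {M Z : C} (m : M ⟶ Z) (hm : Mono m) :
    Nat.card (M ⟶ Ω) ≤ Nat.card (Z ⟶ Ω) := by
  haveI := hm
  haveI : Injective Ω := injective_omega hc
  haveI := lf Z Ω
  exact Nat.card_le_card_of_surjective (fun χ : (Z ⟶ Ω) => m ≫ χ)
    (fun f => ⟨Injective.factorThru f m, Injective.comp_factorThru f m⟩)

lemma isIso_of_mono_card_eq (hc : Classifies tr) (lf : ∀ A B : C, Finite (A ⟶ B))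
    {M Z : C} (m : M ⟶ Z) (hm : Mono m)
    (hcard : Nat.card (M ⟶ Ω) = Nat.card (Z ⟶ Ω)) : IsIso m := by
  haveI := hm
  haveI : Injective Ω := injective_omega hc
  haveI := lf Z Ω; haveI := lf M Ω
  haveI : Fintype (Z ⟶ Ω) := Fintype.ofFinite _
  haveI : Fintype (M ⟶ Ω) := Fintype.ofFinite _
  have hsurj : Function.Surjective (fun χ : (Z ⟶ Ω) => m ≫ χ) :=
    fun f => ⟨Injective.factorThru f m, Injective.comp_factorThru f m⟩
  have hbij : Function.Bijective (fun χ : (Z ⟶ Ω) => m ≫ χ) := by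
    rw [Fintype.bijective_iff_surjective_and_card]
    refine ⟨hsurj, ?_⟩
    have := hcard
    simp only [Nat.card_eq_fintype_card] at this
    omega
  exact isIso_of_omegaEpi hc m hm (fun χ χ' h => hbij.1 h)

end Card

section Whisker

variable [CartesianMonoidalCategory C]

lemma mono_whiskerLeft (X : C) {Y Z : C} (g : Y ⟶ Z) (hg : Mono g) : Mono (X ◁ g) := by
  haveI := hg
  constructor
  intro T a b hab
  apply CartesianMonoidalCategory.hom_ext
  · have h1 := congrArg (fun z => z ≫ CartesianMonoidalCategory.fst _ _) hab
    simpa using h1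
  · have h2 := congrArg (fun z => z ≫ CartesianMonoidalCategory.snd _ _) hab
    simp only [Category.assoc, CartesianMonoidalCategory.whiskerLeft_snd] at h2
    rw [← Category.assoc, ← Category.assoc] at h2
    exact (cancel_mono g).mp h2

lemma epi_whiskerLeft [MonoidalClosed C] (X : C) {Y Z : C} (g : Y ⟶ Z) (hg : Epi g) :
    Epi (X ◁ g) := by
  haveI := hg
  constructor
  intro W u v huv
  apply MonoidalClosed.curry_injective
  have h1 : g ≫ MonoidalClosed.curry u = g ≫ MonoidalClosed.curry v := by
    rw [← MonoidalClosed.curry_natural_left, ← MonoidalClosed.curry_natural_left, huv]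
  exact (cancel_epi g).mp h1

lemma epi_whiskerRight [MonoidalClosed C] {X Y : C} (g : X ⟶ Y) (Z : C) (hg : Epi g) :
    Epi (g ▷ Z) := by
  letI : BraidedCategory C := .ofCartesianMonoidalCategory
  have hb := BraidedCategory.braiding_naturality_left g Z
  have h2 : g ▷ Z = (β_ X Z).hom ≫ (Z ◁ g) ≫ (β_ Y Z).inv := by
    rw [← Category.assoc, ← hb, Category.assoc, Iso.hom_inv_id, Category.comp_id]
  rw [h2]
  haveI := epi_whiskerLeft Z g hg
  infer_instance

lemma epi_tensorHom [MonoidalClosed C] {X Y X' Y' : C} (f : X ⟶ Y) (g : X' ⟶ Y')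
    (hf : Epi f) (hg : Epi g) : Epi (f ⊗ₘ g) := by
  rw [MonoidalCategory.tensorHom_def]
  haveI := epi_whiskerRight f X' hf
  haveI := epi_whiskerLeft Y g hg
  infer_instance

end Whisker

section Exp

variable [HasFiniteLimits C] [CartesianMonoidalCategory C] [MonoidalClosed C]
variable {Ω : C} {tr : ⊤_ C ⟶ Ω}

/-- Powers of Ω are injective. -/
lemma injective_exp (hc : Classifies tr) (X : C) : Injective (X ⟹ Ω) := by
  haveI : Injective Ω := injective_omega hc
  constructor
  intro S T g f hf
  haveI := hf
  haveI : Mono (X ◁ f) := mono_whiskerLeft X f hf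
  refine ⟨MonoidalClosed.curry (Injective.factorThru (MonoidalClosed.uncurry g) (X ◁ f)), ?_⟩
  rw [← MonoidalClosed.curry_natural_left, Injective.comp_factorThru,
    MonoidalClosed.curry_uncurry]

/-- The diagonal map. -/
noncomputable def delta (X : C) : X ⟶ X ⊗ X := CartesianMonoidalCategory.lift (𝟙 X) (𝟙 X)

lemma delta_fst (X : C) : delta X ≫ CartesianMonoidalCategory.fst _ _ = 𝟙 X :=
  CartesianMonoidalCategory.lift_fst _ _

lemma delta_snd (X : C) : delta X ≫ CartesianMonoidalCategory.snd _ _ = 𝟙 X :=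
  CartesianMonoidalCategory.lift_snd _ _

lemma delta_mono (X : C) : Mono (delta X) := by
  constructor
  intro T a b hab
  have h1 := congrArg (fun z => z ≫ CartesianMonoidalCategory.fst _ _) hab
  simpa [delta] using h1

/-- The singleton map `A ⟶ Ω^A`. -/
noncomputable def sigmaMap (hc : Classifies tr) (A : C) : A ⟶ (A ⟹ Ω) :=
  MonoidalClosed.curry (cls hc (delta A) (delta_mono A))

lemma sigmaMap_mono (hc : Classifies tr) (A : C) : Mono (sigmaMap hc A) := by
  constructor
  intro T a b hab
  set χδ : A ⊗ A ⟶ Ω := cls hc (delta A) (delta_mono A) with hχδ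
  have hu : (A ◁ a) ≫ χδ = (A ◁ b) ≫ χδ := by
    have h := congrArg MonoidalClosed.uncurry hab
    rw [MonoidalClosed.uncurry_natural_left, MonoidalClosed.uncurry_natural_left] at h
    simpa only [sigmaMap, MonoidalClosed.uncurry_curry] using h
  have e1 : CartesianMonoidalCategory.lift a (𝟙 T) ≫ (A ◁ a) = CartesianMonoidalCategory.lift a a := by
    apply CartesianMonoidalCategory.hom_ext <;> simp
  have e2 : CartesianMonoidalCategory.lift a (𝟙 T) ≫ (A ◁ b) = CartesianMonoidalCategory.lift a b := by
    apply CartesianMonoidalCategory.hom_ext <;> simp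
  have e3 : CartesianMonoidalCategory.lift a a = a ≫ delta A := by
    apply CartesianMonoidalCategory.hom_ext <;> simp [delta]
  have h2 : CartesianMonoidalCategory.lift a b ≫ χδ = terminal.from T ≫ tr := by
    rw [← e2, Category.assoc, ← hu, ← Category.assoc, e1, e3, Category.assoc,
      cls_w hc (delta A) (delta_mono A), ← Category.assoc,
      term_ext (a ≫ terminal.from A) (terminal.from T)]
  have hl : (cls_isPullback hc (delta A) (delta_mono A)).lift
      (CartesianMonoidalCategory.lift a b) (terminal.from T) h2 ≫ delta A
      = CartesianMonoidalCategory.lift a b :=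
    (cls_isPullback hc (delta A) (delta_mono A)).lift_fst _ _ _
  set ℓ := (cls_isPullback hc (delta A) (delta_mono A)).lift
      (CartesianMonoidalCategory.lift a b) (terminal.from T) h2 with hℓ
  have ha : ℓ = a := by
    have := congrArg (fun z => z ≫ CartesianMonoidalCategory.fst A A) hl
    simpa [delta] using this
  have hb : ℓ = b := by
    have := congrArg (fun z => z ≫ CartesianMonoidalCategory.snd A A) hl
    simpa [delta] using this
  rw [← ha, ← hb]

end Exp

section Retract

variable [HasFiniteLimits C]

lemma injective_of_retract {X Y : C} (i : X ⟶ Y) (r : Y ⟶ X) (hir : i ≫ r = 𝟙 X)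
    (hY : Injective Y) : Injective X := by
  constructor
  intro S T g f hf
  haveI := hf
  haveI := hY
  refine ⟨Injective.factorThru (g ≫ i) f ≫ r, ?_⟩
  rw [← Category.assoc, Injective.comp_factorThru, Category.assoc, hir, Category.comp_id]

lemma essential_id (A : C) : Essential (𝟙 A) :=
  ⟨inferInstance, fun X g hg => by rwa [Category.id_comp] at hg⟩

lemma essential_comp {A B D : C} {e : A ⟶ B} {v : B ⟶ D} (he : Essential e)
    (hv : Essential v) : Essential (e ≫ v) := by
  haveI := he.1; haveI := hv.1
  refine ⟨mono_comp _ _, fun X w hw => ?_⟩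
  rw [Category.assoc] at hw
  exact hv.2 w (he.2 (v ≫ w) hw)

end Retract
end InjHullAux

namespace InjHullAux
open MonoidalCategory CartesianMonoidalCategory CartesianClosed
variable {C : Type u} [Category.{v} C]
section Ker

variable [HasFiniteLimits C] [CartesianMonoidalCategory C] [MonoidalClosed C]
variable {Ω : C} {tr : ⊤_ C ⟶ Ω}

/-- The kernel pair of `g` as a subobject of `Y ⊗ Y`. -/
noncomputable def kpair {Y Z : C} (g : Y ⟶ Z) : pullback g g ⟶ Y ⊗ Y :=
  CartesianMonoidalCategory.lift (pullback.fst g g) (pullback.snd g g)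

lemma kpair_fst {Y Z : C} (g : Y ⟶ Z) :
    kpair g ≫ CartesianMonoidalCategory.fst _ _ = pullback.fst g g :=
  CartesianMonoidalCategory.lift_fst _ _

lemma kpair_snd {Y Z : C} (g : Y ⟶ Z) :
    kpair g ≫ CartesianMonoidalCategory.snd _ _ = pullback.snd g g :=
  CartesianMonoidalCategory.lift_snd _ _

lemma kpair_mono {Y Z : C} (g : Y ⟶ Z) : Mono (kpair g) := by
  constructor
  intro T a b hab
  apply pullback.hom_ext
  · have := congrArg (fun z => z ≫ CartesianMonoidalCategory.fst _ _) hab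
    simpa [kpair] using this
  · have := congrArg (fun z => z ≫ CartesianMonoidalCategory.snd _ _) hab
    simpa [kpair] using this

lemma cls_kpair_comp (hc : Classifies tr) {Y Z M : C} (g : Y ⟶ Z) (p : Z ⟶ M) :
    cls hc (kpair (g ≫ p)) (kpair_mono _) = (g ⊗ₘ g) ≫ cls hc (kpair p) (kpair_mono _) := by
  haveI := kpair_mono (g ≫ p)
  refine (cls_unique hc (kpair (g ≫ p)) (kpair_mono _) _ ?_).symm
  have hq : kpair (g ≫ p) ≫ (g ⊗ₘ g)
      = (pullback.lift (pullback.fst (g ≫ p) (g ≫ p) ≫ g) (pullback.snd (g ≫ p) (g ≫ p) ≫ g)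
          (by simpa [Category.assoc] using pullback.condition (f := g ≫ p) (g := g ≫ p)))
        ≫ kpair p := by
    apply CartesianMonoidalCategory.hom_ext <;> simp [kpair, pullback.lift_fst, pullback.lift_snd]
  have hw : kpair (g ≫ p) ≫ (g ⊗ₘ g) ≫ cls hc (kpair p) (kpair_mono _)
      = terminal.from _ ≫ tr := by
    rw [← Category.assoc, hq, Category.assoc, cls_w hc (kpair p) (kpair_mono _),
      ← Category.assoc, term_ext (_ ≫ terminal.from _) (terminal.from _)]
  refine isPullback_mk hw (fun {T} a b hab => ?_) (fun {T} a b hab => ?_)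
    (fun {T} a b hab => term_ext _ _) (fun {T} m m' h _ => ?_)
  · -- the lift
    have hab' : (a ≫ (g ⊗ₘ g)) ≫ cls hc (kpair p) (kpair_mono _) = b ≫ tr := by
      rw [Category.assoc]; exact hab
    have hℓ : (cls_isPullback hc (kpair p) (kpair_mono _)).lift (a ≫ (g ⊗ₘ g)) b hab'
        ≫ kpair p = a ≫ (g ⊗ₘ g) :=
      (cls_isPullback hc (kpair p) (kpair_mono _)).lift_fst _ _ _
    have h1 := congrArg (fun z => z ≫ CartesianMonoidalCategory.fst Z Z) hℓ
    have h2 := congrArg (fun z => z ≫ CartesianMonoidalCategory.snd Z Z) hℓ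
    simp only [Category.assoc, kpair_fst, kpair_snd,
      CartesianMonoidalCategory.tensorHom_fst, CartesianMonoidalCategory.tensorHom_snd] at h1 h2
    have c1 := congrArg (fun z => z ≫ p) h1
    have c2 := congrArg (fun z => z ≫ p) h2
    simp only [Category.assoc] at c1 c2
    have w' : a ≫ CartesianMonoidalCategory.fst Y Y ≫ g ≫ p
        = a ≫ CartesianMonoidalCategory.snd Y Y ≫ g ≫ p := by
      rw [← c1, ← c2, pullback.condition]
    exact pullback.lift (a ≫ CartesianMonoidalCategory.fst Y Y) (a ≫ CartesianMonoidalCategory.snd Y Y)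
      (by simpa [Category.assoc] using w')
  · apply CartesianMonoidalCategory.hom_ext <;> simp [kpair, pullback.lift_fst, pullback.lift_snd]
  · exact (cancel_mono (kpair (g ≫ p))).mp h

lemma cls_kpair_self (hc : Classifies tr) {Y Z : C} (g : Y ⟶ Z) :
    cls hc (kpair g) (kpair_mono g) = (g ⊗ₘ g) ≫ cls hc (delta Z) (delta_mono Z) := by
  haveI := kpair_mono g
  refine (cls_unique hc (kpair g) (kpair_mono g) _ ?_).symm
  have hq : kpair g ≫ (g ⊗ₘ g) = (pullback.fst g g ≫ g) ≫ delta Z := by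
    apply CartesianMonoidalCategory.hom_ext <;>
      simp [kpair, delta, pullback.condition]
  have hw : kpair g ≫ (g ⊗ₘ g) ≫ cls hc (delta Z) (delta_mono Z) = terminal.from _ ≫ tr := by
    rw [← Category.assoc, hq, Category.assoc, Category.assoc,
      cls_w hc (delta Z) (delta_mono Z)]
    rw [← Category.assoc, ← Category.assoc,
      term_ext ((pullback.fst g g ≫ g) ≫ terminal.from Z) (terminal.from _)]
  refine isPullback_mk hw (fun {T} a b hab => ?_) (fun {T} a b hab => ?_)
    (fun {T} a b hab => term_ext _ _) (fun {T} m m' h _ => ?_)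
  · have hab' : (a ≫ (g ⊗ₘ g)) ≫ cls hc (delta Z) (delta_mono Z) = b ≫ tr := by
      rw [Category.assoc]; exact hab
    have hℓ : (cls_isPullback hc (delta Z) (delta_mono Z)).lift (a ≫ (g ⊗ₘ g)) b hab'
        ≫ delta Z = a ≫ (g ⊗ₘ g) :=
      (cls_isPullback hc (delta Z) (delta_mono Z)).lift_fst _ _ _
    have h1 := congrArg (fun z => z ≫ CartesianMonoidalCategory.fst Z Z) hℓ
    have h2 := congrArg (fun z => z ≫ CartesianMonoidalCategory.snd Z Z) hℓ
    simp only [Category.assoc, delta, CartesianMonoidalCategory.lift_fst,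
      CartesianMonoidalCategory.lift_snd, Category.comp_id,
      CartesianMonoidalCategory.tensorHom_fst, CartesianMonoidalCategory.tensorHom_snd] at h1 h2
    -- h1 : ℓ = a ≫ fst ≫ g,  h2 : ℓ = a ≫ snd ≫ g
    exact pullback.lift (a ≫ CartesianMonoidalCategory.fst Y Y) (a ≫ CartesianMonoidalCategory.snd Y Y)
      (by simpa [Category.assoc] using h1.symm.trans h2)
  · apply CartesianMonoidalCategory.hom_ext <;> simp [kpair, pullback.lift_fst, pullback.lift_snd]
  · exact (cancel_mono (kpair g)).mp h

end Ker
end InjHullAux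

namespace InjHullAux
open MonoidalCategory CartesianMonoidalCategory CartesianClosed
variable {C : Type u} [Category.{v} C]
section Order

variable [HasFiniteLimits C] {Ω : C}

/-- Order on "predicates" `W ⟶ Ω` by inclusion of the corresponding subobjects. -/
def clsLE (tr : ⊤_ C ⟶ Ω) {W : C} (χ χ' : W ⟶ Ω) : Prop :=
  ∃ t : pullback χ tr ⟶ pullback χ' tr, t ≫ pullback.fst χ' tr = pullback.fst χ tr

lemma clsLE_refl (tr : ⊤_ C ⟶ Ω) {W : C} (χ : W ⟶ Ω) : clsLE tr χ χ :=
  ⟨𝟙 _, Category.id_comp _⟩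

lemma clsLE_trans (tr : ⊤_ C ⟶ Ω) {W : C} {χ χ' χ'' : W ⟶ Ω}
    (h : clsLE tr χ χ') (h' : clsLE tr χ' χ'') : clsLE tr χ χ'' := by
  obtain ⟨t, ht⟩ := h
  obtain ⟨s, hs⟩ := h'
  exact ⟨t ≫ s, by rw [Category.assoc, hs, ht]⟩

variable {tr : ⊤_ C ⟶ Ω}

lemma clsLE_of_factor (hc : Classifies tr) {M M' W : C} (m : M ⟶ W) (m' : M' ⟶ W)
    (hm : Mono m) (hm' : Mono m') (t : M ⟶ M') (ht : t ≫ m' = m) :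
    clsLE tr (cls hc m hm) (cls hc m' hm') := by
  have hφ : (cls_isPullback hc m hm).lift (pullback.fst (cls hc m hm) tr)
      (pullback.snd (cls hc m hm) tr) pullback.condition ≫ m
      = pullback.fst (cls hc m hm) tr :=
    (cls_isPullback hc m hm).lift_fst _ _ _
  set φ := (cls_isPullback hc m hm).lift (pullback.fst (cls hc m hm) tr)
      (pullback.snd (cls hc m hm) tr) pullback.condition with hφdef
  have e : pullback.fst (cls hc m hm) tr = φ ≫ t ≫ m' := by rw [ht, hφ]
  have hw : pullback.fst (cls hc m hm) tr ≫ cls hc m' hm'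
      = pullback.snd (cls hc m hm) tr ≫ tr := by
    rw [e, Category.assoc, Category.assoc, cls_w hc m' hm', ← Category.assoc,
      ← Category.assoc, term_ext ((φ ≫ t) ≫ terminal.from M') (pullback.snd (cls hc m hm) tr)]
  exact ⟨pullback.lift (pullback.fst (cls hc m hm) tr) (pullback.snd (cls hc m hm) tr) hw,
    pullback.lift_fst _ _ _⟩

lemma factor_of_clsLE (hc : Classifies tr) {M M' W : C} (m : M ⟶ W) (m' : M' ⟶ W)
    (hm : Mono m) (hm' : Mono m')
    (h : clsLE tr (cls hc m hm) (cls hc m' hm')) : ∃ t : M ⟶ M', t ≫ m' = m := by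
  obtain ⟨t, ht⟩ := h
  have hψ : pullback.lift m (terminal.from M) (cls_w hc m hm)
      ≫ pullback.fst (cls hc m hm) tr = m := pullback.lift_fst _ _ _
  have hφ' : (cls_isPullback hc m' hm').lift (pullback.fst (cls hc m' hm') tr)
      (pullback.snd (cls hc m' hm') tr) pullback.condition ≫ m'
      = pullback.fst (cls hc m' hm') tr :=
    (cls_isPullback hc m' hm').lift_fst _ _ _
  refine ⟨pullback.lift m (terminal.from M) (cls_w hc m hm) ≫ t
    ≫ (cls_isPullback hc m' hm').lift (pullback.fst (cls hc m' hm') tr)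
      (pullback.snd (cls hc m' hm') tr) pullback.condition, ?_⟩
  rw [Category.assoc, Category.assoc, hφ', ht, hψ]

lemma cls_eq_of_factors (hc : Classifies tr) {M M' W : C} (m : M ⟶ W) (m' : M' ⟶ W)
    (hm : Mono m) (hm' : Mono m') (t : M ⟶ M') (t' : M' ⟶ M)
    (ht : t ≫ m' = m) (ht' : t' ≫ m = m') : cls hc m hm = cls hc m' hm' := by
  haveI := hm'
  apply cls_unique hc m' hm'
  have hw : m' ≫ cls hc m hm = terminal.from M' ≫ tr := by
    rw [← ht', Category.assoc, cls_w hc m hm, ← Category.assoc,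
      term_ext (t' ≫ terminal.from M) (terminal.from M')]
  refine isPullback_mk hw (fun {T} a b hab => ?_) (fun {T} a b hab => ?_)
    (fun {T} a b hab => term_ext _ _) (fun {T} u u' h _ => (cancel_mono m').mp h)
  · exact (cls_isPullback hc m hm).lift a b hab ≫ t
  · rw [Category.assoc, ht]
    exact (cls_isPullback hc m hm).lift_fst a b hab

end Order

section Factor

variable [HasFiniteLimits C] {Ω : C} {tr : ⊤_ C ⟶ Ω}

lemma epi_of_no_proper {Y Z : C} (f : Y ⟶ Z)
    (h : ∀ (M : C) (m : M ⟶ Z) (f' : Y ⟶ M), Mono m → f' ≫ m = f → IsIso m) : Epi f := by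
  constructor
  intro W h₁ h₂ heq
  have hfac : equalizer.lift f heq ≫ equalizer.ι h₁ h₂ = f := equalizer.lift_ι _ _
  haveI : IsIso (equalizer.ι h₁ h₂) :=
    h _ (equalizer.ι h₁ h₂) (equalizer.lift f heq) inferInstance hfac
  rw [← cancel_epi (equalizer.ι h₁ h₂)]
  exact equalizer.condition h₁ h₂

/-- Epi-mono factorization, using local finiteness. -/
lemma factorEpiMono (hc : Classifies tr) (lf : ∀ A B : C, Finite (A ⟶ B))
    {Y Z : C} (f : Y ⟶ Z) :
    ∃ (M : C) (p : Y ⟶ M) (m : M ⟶ Z), Epi p ∧ Mono m ∧ p ≫ m = f := by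
  suffices H : ∀ (n : ℕ) {Y Z : C} (f : Y ⟶ Z), Nat.card (Z ⟶ Ω) ≤ n →
      ∃ (M : C) (p : Y ⟶ M) (m : M ⟶ Z), Epi p ∧ Mono m ∧ p ≫ m = f by
    exact H (Nat.card (Z ⟶ Ω)) f le_rfl
  intro n
  induction n with
  | zero =>
    intro Y Z f hn
    haveI := lf Z Ω
    haveI : Nonempty (Z ⟶ Ω) := ⟨terminal.from Z ≫ tr⟩
    have := Nat.card_pos (α := Z ⟶ Ω)
    omega
  | succ n ih =>
    intro Y Z f hn
    by_cases hex : ∃ (M : C) (m : M ⟶ Z) (f' : Y ⟶ M), Mono m ∧ ¬ IsIso m ∧ f' ≫ m = f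
    · obtain ⟨M, m, f', hm, hni, hfac⟩ := hex
      have hle : Nat.card (M ⟶ Ω) ≤ Nat.card (Z ⟶ Ω) := card_le_of_mono hc lf m hm
      have hlt : Nat.card (M ⟶ Ω) < Nat.card (Z ⟶ Ω) := by
        rcases lt_or_eq_of_le hle with h | h
        · exact h
        · exact absurd (isIso_of_mono_card_eq hc lf m hm h) hni
      obtain ⟨N, p, m', hp, hm', hfac'⟩ := ih f' (by omega)
      exact ⟨N, p, m' ≫ m, hp, by haveI := hm'; haveI := hm; exact mono_comp _ _, by rw [← Category.assoc, hfac', hfac]⟩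
    · push_neg at hex
      refine ⟨Z, f, 𝟙 Z, ?_, inferInstance, Category.comp_id f⟩
      exact epi_of_no_proper f (fun M m f' hm hfac => by by_contra hni; exact hex M m f' hm hni hfac)

end Factor
end InjHullAux

namespace InjHullAux
open MonoidalCategory CartesianMonoidalCategory CartesianClosed
variable {C : Type u} [Category.{v} C]
section Essentialize

variable [HasFiniteLimits C] [CartesianMonoidalCategory C] [MonoidalClosed C]
variable {Ω : C} {tr : ⊤_ C ⟶ Ω}

/-- Every mono can be "essentialized": there is a further map making the composite
an essential mono. -/
lemma essentialize (hc : Classifies tr) (lf : ∀ A B : C, Finite (A ⟶ B))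
    {E I : C} (u : E ⟶ I) (hu : Mono u) :
    ∃ (Z : C) (g : I ⟶ Z), Essential (u ≫ g) := by
  haveI := lf (I ⊗ I) Ω
  set S : Set ((I ⊗ I) ⟶ Ω) :=
    {χ | ∃ (Z : C) (g : I ⟶ Z), Epi g ∧ Mono (u ≫ g) ∧ χ = cls hc (kpair g) (kpair_mono g)}
    with hSdef
  have hS0 : cls hc (kpair (𝟙 I)) (kpair_mono (𝟙 I)) ∈ S :=
    ⟨I, 𝟙 I, inferInstance, by rw [Category.comp_id]; exact hu, rfl⟩
  obtain ⟨χ₀, hχ₀S, hmax⟩ := Set.Finite.exists_maximalFor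
    (fun χ => {ψ | clsLE tr ψ χ}.ncard) S (Set.toFinite S) ⟨_, hS0⟩
  obtain ⟨Z, g, hg, hug, hχ₀⟩ := hχ₀S
  refine ⟨Z, g, hug, ?_⟩
  intro X h hmono
  obtain ⟨M, p, mm, hp, hmm, hfac⟩ := factorEpiMono hc lf h
  haveI hge := hg
  haveI hpe := hp
  have hgpe : Epi (g ≫ p) := epi_comp _ _
  set g' : I ⟶ M := g ≫ p with hg'
  have hug' : Mono (u ≫ g') := by
    have hc1 : (u ≫ g') ≫ mm = (u ≫ g) ≫ h := by
      rw [hg', ← hfac]; simp [Category.assoc]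
    haveI : Mono ((u ≫ g') ≫ mm) := by rw [hc1]; exact hmono
    exact mono_of_mono _ mm
  have hS' : cls hc (kpair g') (kpair_mono g') ∈ S := ⟨M, g', hgpe, hug', rfl⟩
  have hcondt : pullback.fst g g ≫ g' = pullback.snd g g ≫ g' := by
    rw [hg', ← Category.assoc, ← Category.assoc, pullback.condition]
  have htfac : pullback.lift (pullback.fst g g) (pullback.snd g g) hcondt ≫ kpair g'
      = kpair g := by
    apply CartesianMonoidalCategory.hom_ext <;> simp [kpair, pullback.lift_fst, pullback.lift_snd]
  have hle : clsLE tr χ₀ (cls hc (kpair g') (kpair_mono g')) := by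
    rw [hχ₀]
    exact clsLE_of_factor hc _ _ _ _ _ htfac
  have hsub : {ψ | clsLE tr ψ χ₀} ⊆ {ψ | clsLE tr ψ (cls hc (kpair g') (kpair_mono g'))} :=
    fun ψ hψ => clsLE_trans tr hψ hle
  have hcard : {ψ | clsLE tr ψ χ₀}.ncard
      = {ψ | clsLE tr ψ (cls hc (kpair g') (kpair_mono g'))}.ncard :=
    le_antisymm (Set.ncard_le_ncard hsub (Set.toFinite _))
        (hmax hS' (Set.ncard_le_ncard hsub (Set.toFinite _)))
  have hseteq : {ψ | clsLE tr ψ χ₀}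
      = {ψ | clsLE tr ψ (cls hc (kpair g') (kpair_mono g'))} :=
    Set.eq_of_subset_of_ncard_le hsub (le_of_eq hcard.symm) (Set.toFinite _)
  have hle' : clsLE tr (cls hc (kpair g') (kpair_mono g')) χ₀ := by
    have hmem : cls hc (kpair g') (kpair_mono g') ∈ {ψ | clsLE tr ψ χ₀} := by
      rw [hseteq]; exact clsLE_refl tr _
    exact hmem
  rw [hχ₀] at hle'
  obtain ⟨t', ht'⟩ := factor_of_clsLE hc _ _ _ _ hle'
  have hclseq : cls hc (kpair g) (kpair_mono g) = cls hc (kpair g') (kpair_mono g') :=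
    cls_eq_of_factors hc _ _ _ _ _ t' htfac ht'
  have h1 : (g ⊗ₘ g) ≫ cls hc (delta Z) (delta_mono Z)
      = (g ⊗ₘ g) ≫ cls hc (kpair p) (kpair_mono p) := by
    rw [← cls_kpair_self hc g, hclseq, hg', cls_kpair_comp hc g p]
  haveI : Epi (g ⊗ₘ g) := epi_tensorHom g g hg hg
  have h2 : cls hc (delta Z) (delta_mono Z) = cls hc (kpair p) (kpair_mono p) :=
    (cancel_epi _).mp h1
  have hpm : Mono p := by
    constructor
    intro T a b hab
    have hwS : kpair p ≫ cls hc (delta Z) (delta_mono Z) = terminal.from _ ≫ tr := by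
      rw [h2]; exact cls_w hc (kpair p) (kpair_mono p)
    have hs : (cls_isPullback hc (delta Z) (delta_mono Z)).lift (kpair p) (terminal.from _) hwS
        ≫ delta Z = kpair p :=
      (cls_isPullback hc (delta Z) (delta_mono Z)).lift_fst _ _ _
    set Sl := (cls_isPullback hc (delta Z) (delta_mono Z)).lift (kpair p) (terminal.from _) hwS
      with hSl
    have hq1 : pullback.lift a b hab ≫ kpair p ≫ CartesianMonoidalCategory.fst Z Z = a := by
      simp [kpair, pullback.lift_fst, pullback.lift_snd]
    have hq2 : pullback.lift a b hab ≫ kpair p ≫ CartesianMonoidalCategory.snd Z Z = b := by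
      simp [kpair, pullback.lift_fst, pullback.lift_snd]
    calc a = pullback.lift a b hab ≫ kpair p ≫ CartesianMonoidalCategory.fst Z Z := hq1.symm
      _ = pullback.lift a b hab ≫ Sl := by
          rw [← hs, Category.assoc, delta_fst, Category.comp_id]
      _ = pullback.lift a b hab ≫ (Sl ≫ delta Z) ≫ CartesianMonoidalCategory.snd Z Z := by
          rw [Category.assoc, delta_snd, Category.comp_id]
      _ = pullback.lift a b hab ≫ kpair p ≫ CartesianMonoidalCategory.snd Z Z := by rw [hs]
      _ = b := hq2
  rw [← hfac]
  haveI := hpm; haveI := hmm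
  exact mono_comp _ _

end Essentialize
end InjHullAux

theorem injective_hull_exists {C : Type u} [Category.{v} C] [HasFiniteLimits C] [CartesianMonoidalCategory C]
    [MonoidalClosed C] [_root_.HasSubobjectClassifier C]
    (locallyFinite : ∀ A B : C, Finite (A ⟶ B)) (A : C) :
    ∃ (E : C) (e : A ⟶ E), Essential e ∧ Injective E := by
  classical
  obtain ⟨Ω, tr, hc0⟩ := HasSubobjectClassifier.exists_classifier (C := C)
  have hc : InjHullAux.Classifies tr := by intro U X m hm; exact hc0 m hm
  haveI hΩinj : Injective Ω := InjHullAux.injective_omega hc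
  haveI hIinj : Injective ((ihom A).obj Ω) := InjHullAux.injective_exp hc A
  have hσ : Mono (InjHullAux.sigmaMap hc A) := InjHullAux.sigmaMap_mono hc A
  have hbound : ∀ (E : C) (e : A ⟶ E), Essential e →
      Nat.card (E ⟶ Ω) ≤ Nat.card ((ihom A).obj Ω ⟶ Ω) := by
    intro E e he
    haveI := he.1
    haveI := hσ
    have hfac : e ≫ Injective.factorThru (InjHullAux.sigmaMap hc A) e
        = InjHullAux.sigmaMap hc A := Injective.comp_factorThru _ _
    have hmono : Mono (Injective.factorThru (InjHullAux.sigmaMap hc A) e) :=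
      he.2 _ (by rw [hfac]; exact hσ)
    exact InjHullAux.card_le_of_mono hc locallyFinite _ hmono
  set N : Set ℕ := {n | ∃ (E : C) (e : A ⟶ E), Essential e ∧ Nat.card (E ⟶ Ω) = n} with hN
  have hNne : N.Nonempty := ⟨Nat.card (A ⟶ Ω), A, 𝟙 A, InjHullAux.essential_id A, rfl⟩
  have hNbdd : BddAbove N := ⟨Nat.card ((ihom A).obj Ω ⟶ Ω), fun n hn => by
    obtain ⟨E, e, he, hcard⟩ := hn
    rw [← hcard]; exact hbound E e he⟩
  obtain ⟨E, e, he, hEcard⟩ := Nat.sSup_mem hNne hNbdd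
  have hmaxE : ∀ (F : C) (f : A ⟶ F), Essential f →
      Nat.card (F ⟶ Ω) ≤ Nat.card (E ⟶ Ω) := by
    intro F f hf
    rw [hEcard]
    exact le_csSup hNbdd ⟨F, f, hf, rfl⟩
  haveI := he.1
  haveI := hσ
  set i := Injective.factorThru (InjHullAux.sigmaMap hc A) e with hi
  have hifac : e ≫ i = InjHullAux.sigmaMap hc A := Injective.comp_factorThru _ _
  have himono : Mono i := he.2 _ (by rw [hifac]; exact hσ)
  obtain ⟨Z, g, hvg⟩ := InjHullAux.essentialize hc locallyFinite i himono
  have hev : Essential (e ≫ (i ≫ g)) := InjHullAux.essential_comp he hvg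
  have hcard1 : Nat.card (Z ⟶ Ω) ≤ Nat.card (E ⟶ Ω) := hmaxE Z (e ≫ (i ≫ g)) hev
  have hcard2 : Nat.card (E ⟶ Ω) ≤ Nat.card (Z ⟶ Ω) :=
    InjHullAux.card_le_of_mono hc locallyFinite _ hvg.1
  haveI hvi : IsIso (i ≫ g) :=
    InjHullAux.isIso_of_mono_card_eq hc locallyFinite _ hvg.1 (le_antisymm hcard2 hcard1)
  have hretr : i ≫ (g ≫ inv (i ≫ g)) = 𝟙 E := by
    rw [← Category.assoc, IsIso.hom_inv_id]
  have hEinj : Injective E := InjHullAux.injective_of_retract i _ hretr hIinj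
  exact ⟨E, e, he, hEinj⟩
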